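/- Let x ≥ 2 be a real number, ε ∈ (0,1), and q a squarefree positive integer. Then ∑_{d ∣ q} d / (log(d·x))^{2-ε} ≤ K · q · log log(e^e·q) / (log(q·x))^{2-ε} for some absolute constant K. -/

import Mathlib

open Finset Real
open Nat


/-- Chebyshev-type bound: sum of logs of primes up to n. -/
lemma theta_le (n : ℕ) :
    ∑ p ∈ (Finset.range (n+1)).filter Nat.Prime, Real.log p ≤ n * Real.log 4 := by
  have h1 : ∑ p ∈ (Finset.range (n+1)).filter Nat.Prime, Real.log p
      = Real.log (primorial n) := by
    rw [primorial, Nat.cast_prod, Real.log_prod]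
    intro p hp
    simp only [Finset.mem_filter] at hp
    exact_mod_cast hp.2.pos.ne'
  rw [h1]
  calc Real.log (primorial n) ≤ Real.log ((4:ℕ) ^ n) := by
        apply Real.log_le_log (by exact_mod_cast (primorial_pos n))
        exact_mod_cast primorial_le_4_pow n
    _ = n * Real.log 4 := by
        push_cast
        rw [Real.log_pow]

/-- log of m as sum over prime factors. -/
lemma log_eq_sum_factorization (m : ℕ) (hm : m ≠ 0) :
    Real.log m = ∑ p ∈ m.primeFactors, (m.factorization p : ℝ) * Real.log p := by
  conv_lhs => rw [← Nat.factorization_prod_pow_eq_self hm]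
  rw [Finsupp.prod, Nat.cast_prod, Real.log_prod]
  · rw [Nat.support_factorization]
    apply Finset.sum_congr rfl
    intro p hp
    rw [Nat.cast_pow, Real.log_pow]
  · intro p hp
    have hp' : p.Prime := Nat.prime_of_mem_primeFactors (by rwa [← Nat.support_factorization])
    have : (0:ℝ) < (p:ℝ) ^ m.factorization p := by
      have : 0 < p := hp'.pos
      positivity
    exact_mod_cast this.ne'

lemma sum_floor_le_log_factorial (n : ℕ) :
    ∑ p ∈ (Finset.range (n+1)).filter Nat.Prime, ((n/p : ℕ) : ℝ) * Real.log p
      ≤ Real.log (n !) := by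
  have hne : n ! ≠ 0 := (Nat.factorial_pos n).ne'
  rw [show Real.log (n !) = ∑ p ∈ (n !).primeFactors,
      ((n !).factorization p : ℝ) * Real.log p from by
    have := log_eq_sum_factorization (n !) hne
    exact_mod_cast this]
  have hsub : (Finset.range (n+1)).filter Nat.Prime ⊆ (n !).primeFactors := by
    intro p hp
    simp only [Finset.mem_filter, Finset.mem_range] at hp
    exact Nat.mem_primeFactors.mpr ⟨hp.2, Nat.dvd_factorial hp.2.pos (by omega), hne⟩
  calc ∑ p ∈ (Finset.range (n+1)).filter Nat.Prime, ((n/p : ℕ) : ℝ) * Real.log p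
      ≤ ∑ p ∈ (Finset.range (n+1)).filter Nat.Prime,
          ((n !).factorization p : ℝ) * Real.log p := by
        apply Finset.sum_le_sum
        intro p hp
        simp only [Finset.mem_filter, Finset.mem_range] at hp
        have hple : p ≤ n := by omega
        have hlog : 0 ≤ Real.log p := Real.log_natCast_nonneg p
        apply mul_le_mul_of_nonneg_right _ hlog
        have hkey : n / p ≤ (n !).factorization p := by
          rw [← hp.2.pow_dvd_iff_le_factorization hne]
          rw [Nat.Prime.pow_dvd_factorial_iff hp.2 (Nat.lt_succ_self _)]
          have hmem : 1 ∈ Finset.Ico 1 (Nat.log p n).succ := by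
            simp only [Finset.mem_Ico]
            exact ⟨le_refl 1, by
              have : 1 ≤ Nat.log p n := Nat.log_pos hp.2.one_lt hple
              omega⟩
          calc n / p = n / p ^ 1 := by rw [pow_one]
            _ ≤ _ := Finset.single_le_sum (f := fun i => n / p ^ i)
                (fun i _ => Nat.zero_le _) hmem
        calc ((n/p : ℕ) : ℝ) ≤ ((n !).factorization p : ℕ) := by exact_mod_cast hkey
          _ = _ := rfl
    _ ≤ _ := by
        apply Finset.sum_le_sum_of_subset_of_nonneg hsub
        intro p hp _
        have hp' : p.Prime := Nat.prime_of_mem_primeFactors hp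
        have : 0 ≤ Real.log p := Real.log_natCast_nonneg p
        positivity

/-- Mertens' first theorem type sum. -/
noncomputable def M1 (n : ℕ) : ℝ :=
  ∑ p ∈ (Finset.range (n+1)).filter Nat.Prime, Real.log p / p

lemma M1_nonneg (n : ℕ) : 0 ≤ M1 n := by
  apply Finset.sum_nonneg
  intro p hp
  have : 0 ≤ Real.log p := Real.log_natCast_nonneg p
  positivity

lemma M1_mono {m n : ℕ} (h : m ≤ n) : M1 m ≤ M1 n := by
  apply Finset.sum_le_sum_of_subset_of_nonneg
  · apply Finset.filter_subset_filter
    exact Finset.range_subset_range.mpr (by omega)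
  · intro p _ _
    have : 0 ≤ Real.log p := Real.log_natCast_nonneg p
    positivity

lemma M1_le (n : ℕ) (hn : 1 ≤ n) : M1 n ≤ Real.log n + Real.log 4 := by
  have hn0 : (0:ℝ) < n := by exact_mod_cast hn
  rw [← mul_le_mul_iff_right₀ hn0]
  have h1 : (n:ℝ) * M1 n = ∑ p ∈ (Finset.range (n+1)).filter Nat.Prime,
      (n:ℝ) / p * Real.log p := by
    rw [M1, Finset.mul_sum]
    apply Finset.sum_congr rfl
    intro p hp
    ring
  rw [h1]
  have h2 : ∑ p ∈ (Finset.range (n+1)).filter Nat.Prime, (n:ℝ) / p * Real.log p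
      ≤ ∑ p ∈ (Finset.range (n+1)).filter Nat.Prime,
          (((n/p : ℕ) : ℝ) * Real.log p + Real.log p) := by
    apply Finset.sum_le_sum
    intro p hp
    simp only [Finset.mem_filter, Finset.mem_range] at hp
    have hp2 : (2:ℝ) ≤ p := by exact_mod_cast hp.2.two_le
    have hlog : 0 ≤ Real.log p := Real.log_natCast_nonneg p
    have hdiv : (n:ℝ) / p ≤ ((n/p : ℕ) : ℝ) + 1 := by
      have hmod := Nat.div_add_mod n p
      have hlt : n % p < p := Nat.mod_lt n hp.2.pos
      have hcast : (n:ℝ) = p * ((n/p : ℕ) : ℝ) + ((n % p : ℕ) : ℝ) := by exact_mod_cast hmod.symm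
      have hlt' : ((n % p : ℕ) : ℝ) < p := by exact_mod_cast hlt
      rw [div_le_iff₀ (by linarith)]
      nlinarith [Nat.cast_nonneg (α := ℝ) (n/p)]
    nlinarith
  have h3 : Real.log (n !) ≤ (n:ℝ) * Real.log n := by
    calc Real.log (n !) ≤ Real.log ((n:ℕ) ^ n) := by
          apply Real.log_le_log (by exact_mod_cast Nat.factorial_pos n)
          exact_mod_cast Nat.factorial_le_pow n
      _ = (n:ℝ) * Real.log n := by push_cast; rw [Real.log_pow]
  have h4 := sum_floor_le_log_factorial n
  have h5 := theta_le n
  rw [Finset.sum_add_distrib] at h2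
  calc ∑ p ∈ (Finset.range (n+1)).filter Nat.Prime, (n:ℝ) / p * Real.log p
      ≤ _ := h2
    _ ≤ (n:ℝ) * Real.log n + (n:ℝ) * Real.log 4 := by
        have := add_le_add (h4.trans h3) h5
        linarith
    _ = (n:ℝ) * (Real.log n + Real.log 4) := by ring

/-- Sum of reciprocals of primes up to n. -/
noncomputable def PS (n : ℕ) : ℝ :=
  ∑ p ∈ (Finset.range (n+1)).filter Nat.Prime, 1 / (p:ℝ)

/-- auxiliary: (v-u)/v ≤ log v - log u for 0 < u ≤ v -/
lemma sub_div_le_log_sub {u v : ℝ} (hu : 0 < u) (huv : u ≤ v) :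
    (v - u) / v ≤ Real.log v - Real.log u := by
  have hv : 0 < v := lt_of_lt_of_le hu huv
  have h1 : Real.log (u / v) ≤ u / v - 1 := Real.log_le_sub_one_of_pos (by positivity)
  rw [Real.log_div hu.ne' hv.ne'] at h1
  have : (v - u)/v = 1 - u/v := by field_simp
  linarith

noncomputable def Gf (n : ℕ) : ℝ :=
  Real.log (Real.log n) + (M1 n - Real.log 4) / Real.log n

lemma log_three_gt_one : (1:ℝ) < Real.log 3 := by
  have h := Real.exp_one_lt_d9
  have : Real.exp 1 < 3 := by norm_num at h ⊢; linarith
  calc (1:ℝ) = Real.log (Real.exp 1) := (Real.log_exp 1).symm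
    _ < Real.log 3 := Real.log_lt_log (Real.exp_pos 1) this

lemma PS_sub_Gf_mono (n : ℕ) (hn : 3 ≤ n) : PS (n+1) - Gf (n+1) ≤ PS n - Gf n := by
  have hn3 : (3:ℝ) ≤ (n:ℝ) := by exact_mod_cast hn
  have hlogn : (1:ℝ) < Real.log n :=
    lt_of_lt_of_le log_three_gt_one (Real.log_le_log (by norm_num) hn3)
  have hlogn1 : (1:ℝ) < Real.log (n+1) := by
    apply lt_of_lt_of_le hlogn
    apply Real.log_le_log (by linarith)
    push_cast; linarith
  have hu : (0:ℝ) < Real.log n := by linarith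
  have hv : (0:ℝ) < Real.log (n+1) := by linarith
  have huv : Real.log n ≤ Real.log (n+1) := by
    apply Real.log_le_log (by linarith); push_cast; linarith
  -- key inequality
  have hM1ub : M1 n - Real.log 4 ≤ Real.log n := by
    have := M1_le n (by omega); linarith
  have hkey : (M1 n - Real.log 4) * (1 / Real.log n - 1 / Real.log (n+1))
      ≤ Real.log (Real.log (n+1)) - Real.log (Real.log n) := by
    have hdiffpos : 0 ≤ 1 / Real.log n - 1 / Real.log (n+1) := by
      rw [sub_nonneg]
      apply div_le_div_of_nonneg_left (by norm_num) hu huv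
    rcases le_or_gt (M1 n - Real.log 4) 0 with hA | hA
    · have h2 : 0 ≤ Real.log (Real.log (n+1)) - Real.log (Real.log n) := by
        rw [sub_nonneg]
        exact Real.log_le_log hu huv
      nlinarith
    · have h3 : (M1 n - Real.log 4) * (1 / Real.log n - 1 / Real.log (n+1))
          ≤ Real.log n * (1 / Real.log n - 1 / Real.log (n+1)) :=
        mul_le_mul_of_nonneg_right hM1ub hdiffpos
      have h4 : Real.log n * (1 / Real.log n - 1 / Real.log (n+1))
          = (Real.log (n+1) - Real.log n) / Real.log (n+1) := by
        field_simp
      have h5 := sub_div_le_log_sub hu huv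
      rw [h4] at h3
      linarith
  -- increments
  have hPSstep : PS (n+1) = PS n + (if (n+1).Prime then 1/((n+1:ℕ):ℝ) else 0) := by
    rw [PS, PS, Finset.sum_filter, Finset.sum_filter, Finset.sum_range_succ]
  have hM1step : M1 (n+1) = M1 n + (if (n+1).Prime then Real.log ((n+1:ℕ):ℝ)/((n+1:ℕ):ℝ) else 0) := by
    rw [M1, M1, Finset.sum_filter, Finset.sum_filter, Finset.sum_range_succ]
  have hcast : ((n+1:ℕ):ℝ) = (n:ℝ)+1 := by push_cast; ring
  rw [hPSstep, Gf, Gf, hM1step, hcast]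
  have hnp1 : (0:ℝ) < (n:ℝ)+1 := by linarith
  by_cases hp : (n+1).Prime
  · simp only [hp, if_true]
    have hexp : (M1 n + Real.log ((n:ℝ)+1)/((n:ℝ)+1) - Real.log 4) / Real.log ((n:ℝ)+1)
        = (M1 n - Real.log 4) / Real.log ((n:ℝ)+1) + 1/((n:ℝ)+1) := by
      field_simp
      ring
    rw [hexp]
    have hrw : (M1 n - Real.log 4) / Real.log ((n:ℝ)+1) - (M1 n - Real.log 4) / Real.log n
        = -((M1 n - Real.log 4) * (1 / Real.log n - 1 / Real.log ((n:ℝ)+1))) := by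
      field_simp
      ring
    have : ((n:ℝ)+1) = ((n+1:ℕ):ℝ) := by push_cast; ring
    rw [this] at hkey hrw ⊢
    push_cast at hkey hrw ⊢
    linarith
  · simp only [hp, if_false]
    have hrw : (M1 n - Real.log 4) / Real.log ((n:ℝ)+1) - (M1 n - Real.log 4) / Real.log n
        = -((M1 n - Real.log 4) * (1 / Real.log n - 1 / Real.log ((n:ℝ)+1))) := by
      field_simp
      ring
    have : ((n:ℝ)+1) = ((n+1:ℕ):ℝ) := by push_cast; ring
    rw [this] at hkey hrw ⊢
    push_cast at hkey hrw ⊢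
    simp only [add_zero] at *
    linarith

lemma PS_le (n : ℕ) (hn : 3 ≤ n) : PS n ≤ Real.log (Real.log n) + 4 := by
  have hmain : PS n - Gf n ≤ PS 3 - Gf 3 := by
    induction n, hn using Nat.le_induction with
    | base => exact le_refl _
    | succ m hm ih => exact le_trans (PS_sub_Gf_mono m hm) ih
  have hn3 : (3:ℝ) ≤ (n:ℝ) := by exact_mod_cast hn
  have hlogn : (1:ℝ) < Real.log n :=
    lt_of_lt_of_le log_three_gt_one (Real.log_le_log (by norm_num) hn3)
  -- Gf n ≤ loglog n + 1
  have hGf : Gf n ≤ Real.log (Real.log n) + 1 := by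
    rw [Gf]
    have h1 : M1 n - Real.log 4 ≤ Real.log n := by
      have := M1_le n (by omega); linarith
    have h2 : (M1 n - Real.log 4) / Real.log n ≤ 1 := by
      rw [div_le_one (by linarith)]
      exact h1
    linarith
  -- PS 3 = 1/2 + 1/3
  have hPS3 : PS 3 = 1/2 + 1/3 := by
    rw [PS]
    norm_num [Finset.sum_filter, Finset.sum_range_succ]
  -- -Gf 3 ≤ log 4
  have hlog4 : Real.log 4 ≤ 1.4 := by
    have h2 : Real.log 2 < 0.6931471808 := Real.log_two_lt_d9
    have : (4:ℝ) = 2^2 := by norm_num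
    rw [this, Real.log_pow]
    push_cast
    linarith
  have hGf3 : -Gf 3 ≤ 1.4 := by
    have h3 : ((3:ℕ):ℝ) = (3:ℝ) := by norm_num
    rw [Gf, h3]
    have hM3 : 0 ≤ M1 3 := M1_nonneg 3
    have hlog3 : (1:ℝ) < Real.log 3 := log_three_gt_one
    have hll3 : 0 ≤ Real.log (Real.log 3) := Real.log_nonneg (by linarith)
    have heq : -(Real.log (Real.log 3) + (M1 3 - Real.log 4) / Real.log 3)
        = -Real.log (Real.log 3) + (Real.log 4 - M1 3) / Real.log 3 := by ring
    rw [heq]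
    have hq : (Real.log 4 - M1 3) / Real.log 3 ≤ Real.log 4 := by
      rcases le_or_gt (Real.log 4 - M1 3) 0 with h | h
      · have h1 : (Real.log 4 - M1 3) / Real.log 3 ≤ 0 :=
          div_nonpos_of_nonpos_of_nonneg h (by linarith)
        have hl4 : 0 ≤ Real.log 4 := Real.log_nonneg (by norm_num)
        linarith
      · have h1 : (Real.log 4 - M1 3) / Real.log 3 ≤ Real.log 4 - M1 3 :=
          div_le_self h.le hlog3.le
        linarith
    linarith
  have hcast3 : ((3:ℕ):ℝ) = (3:ℝ) := by norm_num
  linarith [hmain, hGf, hPS3, hGf3]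

lemma card_primeFactors_le_log2 (q : ℕ) (hq : Squarefree q) :
    q.primeFactors.card ≤ Nat.log 2 q := by
  have hq0 : q ≠ 0 := hq.ne_zero
  rw [Nat.le_log_iff_pow_le (by norm_num) hq0]
  calc 2 ^ q.primeFactors.card = ∏ _p ∈ q.primeFactors, 2 := by rw [Finset.prod_const]
    _ ≤ ∏ p ∈ q.primeFactors, p :=
        Finset.prod_le_prod' fun p hp => (Nat.prime_of_mem_primeFactors hp).two_le
    _ = q := Nat.prod_primeFactors_of_squarefree hq

lemma sum_primeFactors_recip_le (q : ℕ) (hq : Squarefree q) :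
    ∑ p ∈ q.primeFactors, 1/(p:ℝ)
      ≤ Real.log (Real.log ((Nat.log 2 q : ℝ) + 3)) + 5 := by
  set T : ℕ := Nat.log 2 q + 3 with hT
  have hT3 : 3 ≤ T := by omega
  have hTcast : ((T:ℕ):ℝ) = (Nat.log 2 q : ℝ) + 3 := by push_cast [hT]; ring
  rw [← hTcast]
  rw [← Finset.sum_filter_add_sum_filter_not q.primeFactors (· ≤ T)]
  have hhead : ∑ p ∈ q.primeFactors.filter (· ≤ T), 1/(p:ℝ)
      ≤ Real.log (Real.log (T:ℝ)) + 4 := by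
    calc ∑ p ∈ q.primeFactors.filter (· ≤ T), 1/(p:ℝ)
        ≤ ∑ p ∈ (Finset.range (T+1)).filter Nat.Prime, 1/(p:ℝ) := by
          apply Finset.sum_le_sum_of_subset_of_nonneg
          · intro p hp
            simp only [Finset.mem_filter, Finset.mem_range] at *
            exact ⟨by omega, Nat.prime_of_mem_primeFactors hp.1⟩
          · intro p _ _; positivity
      _ = PS T := rfl
      _ ≤ Real.log (Real.log (T:ℝ)) + 4 := PS_le T hT3
  have htail : ∑ p ∈ q.primeFactors.filter (fun p => ¬ p ≤ T), 1/(p:ℝ) ≤ 1 := by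
    have hTpos : (0:ℝ) < (T:ℝ) := by positivity
    have h1 : ∀ p ∈ q.primeFactors.filter (fun p => ¬ p ≤ T), 1/(p:ℝ) ≤ 1/(T:ℝ) := by
      intro p hp
      simp only [Finset.mem_filter, not_le] at hp
      have : (T:ℝ) ≤ (p:ℝ) := by exact_mod_cast hp.2.le
      apply div_le_div_of_nonneg_left (by norm_num) hTpos this
    calc ∑ p ∈ q.primeFactors.filter (fun p => ¬ p ≤ T), 1/(p:ℝ)
        ≤ ∑ _p ∈ q.primeFactors.filter (fun p => ¬ p ≤ T), 1/(T:ℝ) :=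
          Finset.sum_le_sum h1
      _ = (q.primeFactors.filter (fun p => ¬ p ≤ T)).card * (1/(T:ℝ)) := by
          rw [Finset.sum_const, nsmul_eq_mul]
      _ ≤ (Nat.log 2 q : ℝ) * (1/(T:ℝ)) := by
          apply mul_le_mul_of_nonneg_right _ (by positivity)
          have hc : (q.primeFactors.filter (fun p => ¬ p ≤ T)).card ≤ Nat.log 2 q :=
            le_trans (Finset.card_le_card (Finset.filter_subset _ _))
              (card_primeFactors_le_log2 q hq)
          exact_mod_cast hc
      _ ≤ 1 := by
          rw [hTcast] at hTpos ⊢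
          rw [mul_one_div, div_le_one (by linarith)]
          linarith
  linarith

lemma sigma_bound (q : ℕ) (hq : Squarefree q) :
    ∑ d ∈ q.divisors, (d:ℝ) ≤ 360 * q * Real.log (Real.exp 1 + Real.log q) := by
  have hq0 : q ≠ 0 := hq.ne_zero
  have hq1 : (1:ℝ) ≤ (q:ℝ) := by exact_mod_cast Nat.one_le_iff_ne_zero.mpr hq0
  have hlogq : 0 ≤ Real.log q := Real.log_nonneg hq1
  have he1 : (1:ℝ) ≤ Real.exp 1 := by
    have := Real.add_one_le_exp (1:ℝ); linarith
  have hL1 : (1:ℝ) ≤ Real.log (Real.exp 1 + Real.log q) := by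
    calc (1:ℝ) = Real.log (Real.exp 1) := (Real.log_exp 1).symm
      _ ≤ _ := Real.log_le_log (Real.exp_pos 1) (by linarith)
  -- step i: the divisor sum as a product
  have hstep1 : ∑ d ∈ q.divisors, d = ∏ p ∈ q.primeFactors, (1 + p) := by
    rw [Nat.sum_divisors hq0]
    apply Finset.prod_congr rfl
    intro p hp
    have h1 : q.factorization p = 1 := by
      have hle := hq.natFactorization_le_one p
      have hpos : q.factorization p ≠ 0 := by
        rwa [← Finsupp.mem_support_iff, Nat.support_factorization]
      omega
    rw [h1]
    simp [Finset.sum_range_succ]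
  -- cast
  have hstep2 : (∑ d ∈ q.divisors, (d:ℝ)) = ∏ p ∈ q.primeFactors, ((1:ℝ) + p) := by
    rw [← Nat.cast_sum, hstep1]
    push_cast
    rfl
  rw [hstep2]
  -- factor out q
  have hstep3 : (∏ p ∈ q.primeFactors, ((1:ℝ) + p))
      = (q:ℝ) * ∏ p ∈ q.primeFactors, (1 + 1/(p:ℝ)) := by
    have hqprod : (q:ℝ) = ∏ p ∈ q.primeFactors, (p:ℝ) := by
      rw [← Nat.cast_prod, Nat.prod_primeFactors_of_squarefree hq]
    rw [hqprod, ← Finset.prod_mul_distrib]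
    apply Finset.prod_congr rfl
    intro p hp
    have hp2 : (2:ℝ) ≤ (p:ℝ) := by exact_mod_cast (Nat.prime_of_mem_primeFactors hp).two_le
    field_simp
    ring
  rw [hstep3]
  have hstep4 : ∏ p ∈ q.primeFactors, (1 + 1/(p:ℝ))
      ≤ Real.exp (∑ p ∈ q.primeFactors, 1/(p:ℝ)) := by
    rw [Real.exp_sum]
    apply Finset.prod_le_prod
    · intro p hp
      have hp2 : (2:ℝ) ≤ (p:ℝ) := by exact_mod_cast (Nat.prime_of_mem_primeFactors hp).two_le
      positivity
    · intro p hp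
      have := Real.add_one_le_exp (1/(p:ℝ))
      linarith
  have hstep5 : Real.exp (∑ p ∈ q.primeFactors, 1/(p:ℝ))
      ≤ Real.exp 5 * Real.log ((Nat.log 2 q : ℝ) + 3) := by
    calc Real.exp (∑ p ∈ q.primeFactors, 1/(p:ℝ))
        ≤ Real.exp (Real.log (Real.log ((Nat.log 2 q : ℝ) + 3)) + 5) :=
          Real.exp_le_exp.mpr (sum_primeFactors_recip_le q hq)
      _ = Real.exp 5 * Real.log ((Nat.log 2 q : ℝ) + 3) := by
          rw [Real.exp_add, Real.exp_log, mul_comm]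
          have h3 : (3:ℝ) ≤ (Nat.log 2 q : ℝ) + 3 := by
            have := Nat.cast_nonneg (α := ℝ) (Nat.log 2 q); linarith
          have : (1:ℝ) < Real.log ((Nat.log 2 q : ℝ) + 3) :=
            lt_of_lt_of_le log_three_gt_one (Real.log_le_log (by norm_num) h3)
          linarith
  -- log (log2 q + 3) ≤ 2.4 * L'
  have hstep6 : Real.log ((Nat.log 2 q : ℝ) + 3)
      ≤ 2.4 * Real.log (Real.exp 1 + Real.log q) := by
    have hlog2 : (0.6931471803:ℝ) < Real.log 2 := Real.log_two_gt_d9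
    have h2t : ((2:ℕ):ℝ) ^ (Nat.log 2 q) ≤ (q:ℝ) := by
      exact_mod_cast Nat.pow_log_le_self 2 hq0
    have ht : (Nat.log 2 q : ℝ) * Real.log 2 ≤ Real.log q := by
      calc (Nat.log 2 q : ℝ) * Real.log 2 = Real.log ((2:ℝ) ^ (Nat.log 2 q)) := by
            rw [Real.log_pow]
        _ ≤ Real.log q := Real.log_le_log (by positivity) (by exact_mod_cast h2t)
    have ht' : (Nat.log 2 q : ℝ) ≤ 1.45 * Real.log q := by
      nlinarith [Nat.cast_nonneg (α := ℝ) (Nat.log 2 q)]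
    have hbig : (Nat.log 2 q : ℝ) + 3 ≤ 3 * (Real.exp 1 + Real.log q) := by
      nlinarith [he1]
    calc Real.log ((Nat.log 2 q : ℝ) + 3) ≤ Real.log (3 * (Real.exp 1 + Real.log q)) :=
          Real.log_le_log (by positivity) hbig
      _ = Real.log 3 + Real.log (Real.exp 1 + Real.log q) := by
          rw [Real.log_mul (by norm_num) (by positivity)]
      _ ≤ 2.4 * Real.log (Real.exp 1 + Real.log q) := by
          have hlog3 : Real.log 3 ≤ 1.4 := by
            have h4 : Real.log 3 ≤ Real.log 4 := Real.log_le_log (by norm_num) (by norm_num)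
            have : Real.log 4 ≤ 1.4 := by
              have h2 : Real.log 2 < 0.6931471808 := Real.log_two_lt_d9
              have h44 : (4:ℝ) = 2^2 := by norm_num
              rw [h44, Real.log_pow]; push_cast; linarith
            linarith
          linarith
  have hexp5 : Real.exp 5 ≤ 149 := by
    have h := Real.exp_one_lt_d9
    have h5 : Real.exp 5 = (Real.exp 1)^5 := by
      rw [← Real.exp_nat_mul]; norm_num
    rw [h5]
    have hpos := Real.exp_pos 1
    have h272 : Real.exp 1 ≤ 2.72 := by linarith
    calc (Real.exp 1)^5 ≤ (2.72:ℝ)^5 := pow_le_pow_left₀ hpos.le h272 5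
      _ ≤ 149 := by norm_num
  have hqpos : (0:ℝ) < q := by linarith
  have hlogT_nonneg : 0 ≤ Real.log ((Nat.log 2 q : ℝ) + 3) := by
    apply Real.log_nonneg
    have := Nat.cast_nonneg (α := ℝ) (Nat.log 2 q); linarith
  have hP : ∏ p ∈ q.primeFactors, (1 + 1/(p:ℝ))
      ≤ 360 * Real.log (Real.exp 1 + Real.log q) := by
    nlinarith [hstep4, hstep5, hstep6, hexp5, hlogT_nonneg, (Real.exp_pos 5).le, hL1]
  calc (q:ℝ) * ∏ p ∈ q.primeFactors, (1 + 1/(p:ℝ))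
      ≤ (q:ℝ) * (360 * Real.log (Real.exp 1 + Real.log q)) :=
        mul_le_mul_of_nonneg_left hP hqpos.le
    _ = 360 * q * Real.log (Real.exp 1 + Real.log q) := by ring

lemma sq_le_exp (t : ℝ) (ht : 0 ≤ t) : t^2 ≤ Real.exp t := by
  have h := Real.add_one_le_exp (t/4)
  have h4 : Real.exp t = (Real.exp (t/4))^4 := by
    rw [← Real.exp_nat_mul]
    congr 1
    push_cast; ring
  rw [h4]
  have h1 : (0:ℝ) ≤ 1 + t/4 := by linarith
  have h2 : (1 + t/4)^4 ≤ (Real.exp (t/4))^4 := by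
    apply pow_le_pow_left₀ h1 (by linarith)
  nlinarith [sq_nonneg (1 - t/4), sq_nonneg ((1+t/4)^2 - t)]

lemma log_sq_le_sqrt (q : ℝ) (hq : 1 ≤ q) : (Real.log (2*q))^2 ≤ 6 * Real.sqrt q := by
  set u := Real.log (2*q) with hu
  have h2q : (0:ℝ) < 2*q := by linarith
  have hu0 : 0 ≤ u := Real.log_nonneg (by linarith)
  have hexpu : Real.exp u = 2*q := Real.exp_log h2q
  have hkey : (u/2)^2 ≤ Real.exp (u/2) := sq_le_exp (u/2) (by linarith)
  have hsq : Real.exp (u/2) = Real.sqrt (2*q) := by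
    rw [Real.exp_half, hexpu]
  have hs2 : Real.sqrt (2*q) ≤ 1.5 * Real.sqrt q := by
    have h225 : Real.sqrt (2.25*q) = 1.5 * Real.sqrt q := by
      rw [show (2.25*q:ℝ) = (1.5)^2 * q by norm_num, Real.sqrt_mul (by positivity),
        Real.sqrt_sq (by norm_num)]
    rw [← h225]
    exact Real.sqrt_le_sqrt (by linarith)
  nlinarith [Real.sqrt_nonneg q]

/-- key log-ratio monotonicity in x -/
lemma log_ratio (a b x : ℝ) (ha : 1 ≤ a) (hab : a ≤ b) (hx : 2 ≤ x) :
    Real.log (b*x) * Real.log (2*a) ≤ Real.log (2*b) * Real.log (a*x) := by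
  have ha0 : (0:ℝ) < a := by linarith
  have hb0 : (0:ℝ) < b := by linarith
  have hx0 : (0:ℝ) < x := by linarith
  rw [Real.log_mul hb0.ne' hx0.ne', Real.log_mul (by norm_num) ha0.ne',
    Real.log_mul (by norm_num) hb0.ne', Real.log_mul ha0.ne' hx0.ne']
  have h1 : Real.log a ≤ Real.log b := Real.log_le_log ha0 hab
  have h2 : Real.log 2 ≤ Real.log x := Real.log_le_log (by norm_num) hx
  nlinarith [mul_nonneg (sub_nonneg.mpr h1) (sub_nonneg.mpr h2)]

/-- per-term comparison -/
lemma term_bound (d q : ℕ) (x ε : ℝ) (hd : 1 ≤ d) (hdq : d ≤ q) (hx : 2 ≤ x)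
    (hε0 : 0 < ε) (hε1 : ε < 1) :
    (d:ℝ) / (Real.log ((d:ℝ) * x)) ^ (2 - ε)
      ≤ (d:ℝ) * (Real.log (2*(q:ℝ)) / Real.log (2*(d:ℝ)))^2 / (Real.log ((q:ℝ) * x)) ^ (2 - ε) := by
  have ha : (1:ℝ) ≤ (d:ℝ) := by exact_mod_cast hd
  have hab : (d:ℝ) ≤ (q:ℝ) := by exact_mod_cast hdq
  have hlog2 : (0:ℝ) < Real.log 2 := Real.log_pos (by norm_num)
  have hA : Real.log 2 ≤ Real.log (2*(d:ℝ)) := Real.log_le_log (by norm_num) (by linarith)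
  have hB : Real.log (2*(d:ℝ)) ≤ Real.log (2*(q:ℝ)) := Real.log_le_log (by linarith) (by linarith)
  have hA0 : (0:ℝ) < Real.log (2*(d:ℝ)) := by linarith
  have hB0 : (0:ℝ) < Real.log (2*(q:ℝ)) := by linarith
  have hla : Real.log 2 ≤ Real.log ((d:ℝ)*x) := Real.log_le_log (by norm_num) (by nlinarith)
  have hla0 : (0:ℝ) < Real.log ((d:ℝ)*x) := by linarith
  have hlb : Real.log ((d:ℝ)*x) ≤ Real.log ((q:ℝ)*x) :=
    Real.log_le_log (by nlinarith) (by nlinarith)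
  have hlb0 : (0:ℝ) < Real.log ((q:ℝ)*x) := by linarith
  set r := Real.log (2*(q:ℝ)) / Real.log (2*(d:ℝ)) with hr
  have hr1 : (1:ℝ) ≤ r := (one_le_div hA0).mpr hB
  have hkey := log_ratio (d:ℝ) (q:ℝ) x ha hab hx
  have hstep : Real.log ((q:ℝ)*x) ≤ r * Real.log ((d:ℝ)*x) := by
    rw [hr, div_mul_eq_mul_div, le_div_iff₀ hA0]
    nlinarith
  have hs : (0:ℝ) < 2 - ε := by linarith
  have hrpow : (Real.log ((q:ℝ)*x)) ^ (2-ε) ≤ r^2 * (Real.log ((d:ℝ)*x)) ^ (2-ε) := by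
    calc (Real.log ((q:ℝ)*x)) ^ (2-ε) ≤ (r * Real.log ((d:ℝ)*x)) ^ (2-ε) :=
          Real.rpow_le_rpow hlb0.le hstep hs.le
      _ = r ^ (2-ε) * (Real.log ((d:ℝ)*x)) ^ (2-ε) :=
          Real.mul_rpow (by linarith) hla0.le
      _ ≤ r^2 * (Real.log ((d:ℝ)*x)) ^ (2-ε) := by
          apply mul_le_mul_of_nonneg_right _ (Real.rpow_nonneg hla0.le _)
          calc r ^ (2-ε) ≤ r ^ (2:ℝ) :=
                Real.rpow_le_rpow_of_exponent_le hr1 (by linarith)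
            _ = r^2 := by
                rw [show (2:ℝ) = ((2:ℕ):ℝ) by norm_num, Real.rpow_natCast]
  have hpa : (0:ℝ) < (Real.log ((d:ℝ)*x)) ^ (2-ε) := Real.rpow_pos_of_pos hla0 _
  have hpb : (0:ℝ) < (Real.log ((q:ℝ)*x)) ^ (2-ε) := Real.rpow_pos_of_pos hlb0 _
  rw [div_le_div_iff₀ hpa hpb]
  have hd0 : (0:ℝ) ≤ (d:ℝ) := by linarith
  calc (d:ℝ) * (Real.log ((q:ℝ)*x)) ^ (2-ε)
      ≤ (d:ℝ) * (r^2 * (Real.log ((d:ℝ)*x)) ^ (2-ε)) := mul_le_mul_of_nonneg_left hrpow hd0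
    _ = (d:ℝ) * r^2 * (Real.log ((d:ℝ)*x)) ^ (2-ε) := by ring

lemma sum_small_divisors (q m : ℕ) :
    ∑ d ∈ q.divisors.filter (· ≤ m), (d:ℝ) ≤ (m:ℝ)^2 := by
  calc ∑ d ∈ q.divisors.filter (· ≤ m), (d:ℝ)
      ≤ ∑ _d ∈ q.divisors.filter (· ≤ m), (m:ℝ) := by
        apply Finset.sum_le_sum
        intro d hd
        simp only [Finset.mem_filter] at hd
        exact_mod_cast hd.2
    _ = (q.divisors.filter (· ≤ m)).card * (m:ℝ) := by
        rw [Finset.sum_const, nsmul_eq_mul]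
    _ ≤ (m:ℝ) * (m:ℝ) := by
        apply mul_le_mul_of_nonneg_right _ (by positivity)
        have hsub : q.divisors.filter (· ≤ m) ⊆ Finset.Icc 1 m := by
          intro d hd
          simp only [Finset.mem_filter, Finset.mem_Icc] at *
          exact ⟨Nat.pos_of_mem_divisors hd.1, hd.2⟩
        have := Finset.card_le_card hsub
        rw [Nat.card_Icc] at this
        have h2 : (q.divisors.filter (· ≤ m)).card ≤ m := by omega
        exact_mod_cast h2
    _ = (m:ℝ)^2 := by ring

set_option maxHeartbeats 1600000 in
lemma S2_bound (q : ℕ) (hq : Squarefree q) :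
    ∑ d ∈ q.divisors, (d:ℝ) * (Real.log (2*(q:ℝ)) / Real.log (2*(d:ℝ)))^2
      ≤ 1500 * q * Real.log (Real.exp 1 + Real.log q) := by
  have hq0 : q ≠ 0 := hq.ne_zero
  have hq1 : (1:ℝ) ≤ (q:ℝ) := by exact_mod_cast Nat.one_le_iff_ne_zero.mpr hq0
  set L' := Real.log (Real.exp 1 + Real.log q) with hL'
  have he1 : (1:ℝ) ≤ Real.exp 1 := by have := Real.add_one_le_exp (1:ℝ); linarith
  have hlogq : 0 ≤ Real.log q := Real.log_nonneg hq1
  have hL1 : (1:ℝ) ≤ L' := by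
    calc (1:ℝ) = Real.log (Real.exp 1) := (Real.log_exp 1).symm
      _ ≤ L' := Real.log_le_log (Real.exp_pos 1) (by linarith)
  have hlog2 : (0:ℝ) < Real.log 2 := Real.log_pos (by norm_num)
  have hlog2lb : (0.6931471803:ℝ) < Real.log 2 := Real.log_two_gt_d9
  -- generic term facts
  have hterm : ∀ d ∈ q.divisors, (1:ℝ) ≤ (d:ℝ) ∧ (d:ℝ) ≤ (q:ℝ)
      ∧ Real.log 2 ≤ Real.log (2*(d:ℝ)) ∧ Real.log (2*(q:ℝ)) ≤ Real.log (2*(d:ℝ)) + Real.log q := by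
    intro d hd
    have h1 : 1 ≤ d := Nat.pos_of_mem_divisors hd
    have h2 : d ≤ q := Nat.le_of_dvd (Nat.pos_of_ne_zero hq0) (Nat.dvd_of_mem_divisors hd)
    have ha : (1:ℝ) ≤ (d:ℝ) := by exact_mod_cast h1
    have hb : (d:ℝ) ≤ (q:ℝ) := by exact_mod_cast h2
    refine ⟨ha, hb, Real.log_le_log (by norm_num) (by linarith), ?_⟩
    calc Real.log (2*(q:ℝ)) ≤ Real.log (2*(d:ℝ)*(q:ℝ)) :=
          Real.log_le_log (by linarith) (by nlinarith)
      _ = Real.log (2*(d:ℝ)) + Real.log q := Real.log_mul (by nlinarith) (by linarith)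
  -- split
  rw [← Finset.sum_filter_add_sum_filter_not q.divisors (fun d => q < d*d)]
  have hpart1 : ∑ d ∈ q.divisors.filter (fun d => q < d*d),
      (d:ℝ) * (Real.log (2*(q:ℝ)) / Real.log (2*(d:ℝ)))^2 ≤ 1440 * q * L' := by
    have hb1 : ∀ d ∈ q.divisors.filter (fun d => q < d*d),
        (d:ℝ) * (Real.log (2*(q:ℝ)) / Real.log (2*(d:ℝ)))^2 ≤ 4 * (d:ℝ) := by
      intro d hd
      simp only [Finset.mem_filter] at hd
      obtain ⟨ha, hb, hA, _⟩ := hterm d hd.1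
      have hA0 : (0:ℝ) < Real.log (2*(d:ℝ)) := by linarith
      have hdd : (q:ℝ) < (d:ℝ)*(d:ℝ) := by exact_mod_cast hd.2
      have hLle : Real.log (2*(q:ℝ)) ≤ 2 * Real.log (2*(d:ℝ)) := by
        calc Real.log (2*(q:ℝ)) ≤ Real.log ((2*(d:ℝ))^2) :=
              Real.log_le_log (by linarith) (by nlinarith)
          _ = 2 * Real.log (2*(d:ℝ)) := by
              rw [Real.log_pow]; norm_num
      have hL0 : (0:ℝ) ≤ Real.log (2*(q:ℝ)) := Real.log_nonneg (by linarith)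
      have hratio : Real.log (2*(q:ℝ)) / Real.log (2*(d:ℝ)) ≤ 2 := by
        rw [div_le_iff₀ hA0]; linarith
      have hrat0 : 0 ≤ Real.log (2*(q:ℝ)) / Real.log (2*(d:ℝ)) := by positivity
      have hr2 : (Real.log (2*(q:ℝ)) / Real.log (2*(d:ℝ)))^2 ≤ 4 := by nlinarith
      have := mul_le_mul_of_nonneg_left hr2 (by linarith : (0:ℝ) ≤ (d:ℝ))
      linarith
    calc ∑ d ∈ q.divisors.filter (fun d => q < d*d),
          (d:ℝ) * (Real.log (2*(q:ℝ)) / Real.log (2*(d:ℝ)))^2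
        ≤ ∑ d ∈ q.divisors.filter (fun d => q < d*d), 4*(d:ℝ) := Finset.sum_le_sum hb1
      _ ≤ ∑ d ∈ q.divisors, 4*(d:ℝ) := by
          apply Finset.sum_le_sum_of_subset_of_nonneg (Finset.filter_subset _ _)
          intro d _ _; positivity
      _ = 4 * ∑ d ∈ q.divisors, (d:ℝ) := by rw [← Finset.mul_sum]
      _ ≤ 4 * (360 * q * L') := by
          apply mul_le_mul_of_nonneg_left (sigma_bound q hq) (by norm_num)
      _ = 1440 * q * L' := by ring
  have hpart2 : ∑ d ∈ q.divisors.filter (fun d => ¬ q < d*d),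
      (d:ℝ) * (Real.log (2*(q:ℝ)) / Real.log (2*(d:ℝ)))^2 ≤ 60 * q * L' := by
    rw [← Finset.sum_filter_add_sum_filter_not
      (q.divisors.filter (fun d => ¬ q < d*d)) (fun d => q < d*d*(d*d))]
    have hpart2a : ∑ d ∈ (q.divisors.filter (fun d => ¬ q < d*d)).filter
          (fun d => q < d*d*(d*d)),
        (d:ℝ) * (Real.log (2*(q:ℝ)) / Real.log (2*(d:ℝ)))^2 ≤ 16 * q := by
      have hb2 : ∀ d ∈ (q.divisors.filter (fun d => ¬ q < d*d)).filter
            (fun d => q < d*d*(d*d)),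
          (d:ℝ) * (Real.log (2*(q:ℝ)) / Real.log (2*(d:ℝ)))^2 ≤ 16 * (d:ℝ) := by
        intro d hd
        simp only [Finset.mem_filter] at hd
        obtain ⟨ha, hb, hA, _⟩ := hterm d hd.1.1
        have hA0 : (0:ℝ) < Real.log (2*(d:ℝ)) := by linarith
        have hdd : (q:ℝ) < (d:ℝ)*(d:ℝ)*((d:ℝ)*(d:ℝ)) := by exact_mod_cast hd.2
        have hLle : Real.log (2*(q:ℝ)) ≤ 4 * Real.log (2*(d:ℝ)) := by
          calc Real.log (2*(q:ℝ)) ≤ Real.log ((2*(d:ℝ))^4) :=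
                Real.log_le_log (by linarith) (by nlinarith)
            _ = 4 * Real.log (2*(d:ℝ)) := by
                rw [Real.log_pow]; norm_num
        have hratio : Real.log (2*(q:ℝ)) / Real.log (2*(d:ℝ)) ≤ 4 := by
          rw [div_le_iff₀ hA0]; linarith
        have hrat0 : 0 ≤ Real.log (2*(q:ℝ)) / Real.log (2*(d:ℝ)) := by
          apply div_nonneg (Real.log_nonneg (by linarith)) hA0.le
        have hr2 : (Real.log (2*(q:ℝ)) / Real.log (2*(d:ℝ)))^2 ≤ 16 := by nlinarith
        have := mul_le_mul_of_nonneg_left hr2 (by linarith : (0:ℝ) ≤ (d:ℝ))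
        linarith
      have hsubm : (q.divisors.filter (fun d => ¬ q < d*d)).filter (fun d => q < d*d*(d*d))
          ⊆ q.divisors.filter (· ≤ Nat.sqrt q) := by
        intro d hd
        simp only [Finset.mem_filter, not_lt] at *
        exact ⟨hd.1.1, Nat.le_sqrt'.mpr (by nlinarith [hd.1.2])⟩
      calc ∑ d ∈ (q.divisors.filter (fun d => ¬ q < d*d)).filter (fun d => q < d*d*(d*d)),
            (d:ℝ) * (Real.log (2*(q:ℝ)) / Real.log (2*(d:ℝ)))^2
          ≤ ∑ d ∈ (q.divisors.filter (fun d => ¬ q < d*d)).filter (fun d => q < d*d*(d*d)),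
              16*(d:ℝ) := Finset.sum_le_sum hb2
        _ = 16 * ∑ d ∈ (q.divisors.filter (fun d => ¬ q < d*d)).filter
              (fun d => q < d*d*(d*d)), (d:ℝ) := by rw [← Finset.mul_sum]
        _ ≤ 16 * ∑ d ∈ q.divisors.filter (· ≤ Nat.sqrt q), (d:ℝ) := by
            apply mul_le_mul_of_nonneg_left _ (by norm_num)
            apply Finset.sum_le_sum_of_subset_of_nonneg hsubm
            intro d _ _; positivity
        _ ≤ 16 * ((Nat.sqrt q : ℝ)^2) := by
            apply mul_le_mul_of_nonneg_left (sum_small_divisors q (Nat.sqrt q)) (by norm_num)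
        _ ≤ 16 * q := by
            have := Nat.sqrt_le' q
            have : ((Nat.sqrt q)^2 : ℕ) ≤ q := this
            have hc : ((Nat.sqrt q : ℝ))^2 ≤ (q:ℝ) := by exact_mod_cast this
            linarith
    have hpart2b : ∑ d ∈ (q.divisors.filter (fun d => ¬ q < d*d)).filter
          (fun d => ¬ q < d*d*(d*d)),
        (d:ℝ) * (Real.log (2*(q:ℝ)) / Real.log (2*(d:ℝ)))^2 ≤ 27 * q := by
      set m2 := Nat.sqrt (Nat.sqrt q) with hm2
      have hb3 : ∀ d ∈ (q.divisors.filter (fun d => ¬ q < d*d)).filter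
            (fun d => ¬ q < d*d*(d*d)),
          (d:ℝ) * (Real.log (2*(q:ℝ)) / Real.log (2*(d:ℝ)))^2
            ≤ (d:ℝ) * ((Real.log (2*(q:ℝ)))^2 * 2.09) := by
        intro d hd
        simp only [Finset.mem_filter, not_lt] at hd
        obtain ⟨ha, hb, hA, _⟩ := hterm d hd.1.1
        have hA0 : (0:ℝ) < Real.log (2*(d:ℝ)) := by linarith
        have hL0 : 0 ≤ Real.log (2*(q:ℝ)) := Real.log_nonneg (by linarith)
        have hratio : Real.log (2*(q:ℝ)) / Real.log (2*(d:ℝ))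
            ≤ Real.log (2*(q:ℝ)) / Real.log 2 := by
          apply div_le_div_of_nonneg_left hL0 hlog2 hA
        have hrat0 : 0 ≤ Real.log (2*(q:ℝ)) / Real.log (2*(d:ℝ)) := by positivity
        have h22 : (Real.log (2*(q:ℝ)) / Real.log 2)^2
            ≤ (Real.log (2*(q:ℝ)))^2 * 2.09 := by
          rw [div_pow]
          rw [div_le_iff₀ (by positivity)]
          have hlsq : (0.48:ℝ) ≤ (Real.log 2)^2 := by nlinarith
          nlinarith [mul_le_mul_of_nonneg_left hlsq (sq_nonneg (Real.log (2*(q:ℝ))))]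
        have h23 : (Real.log (2*(q:ℝ)) / Real.log (2*(d:ℝ)))^2
            ≤ (Real.log (2*(q:ℝ)) / Real.log 2)^2 := by
          apply pow_le_pow_left₀ hrat0 hratio
        nlinarith
      have hsubm2 : (q.divisors.filter (fun d => ¬ q < d*d)).filter (fun d => ¬ q < d*d*(d*d))
          ⊆ q.divisors.filter (· ≤ m2) := by
        intro d hd
        simp only [Finset.mem_filter, not_lt] at *
        refine ⟨hd.1.1, Nat.le_sqrt'.mpr ?_⟩
        have h1 : d*d*(d*d) ≤ q := hd.2
        have h2 : (d*d)^2 ≤ q := by nlinarith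
        have := Nat.le_sqrt'.mpr h2
        calc d^2 = d*d := sq d
          _ ≤ Nat.sqrt q := this
      have hm2q : ((m2:ℝ))^2 ≤ Real.sqrt q := by
        have h1 : (m2^2 : ℕ) ≤ Nat.sqrt q := Nat.sqrt_le' (Nat.sqrt q)
        have h2 : ((Nat.sqrt q : ℕ))^2 ≤ q := Nat.sqrt_le' q
        have h3 : ((Nat.sqrt q : ℕ):ℝ) ≤ Real.sqrt q := by
          rw [show ((Nat.sqrt q : ℕ):ℝ) = Real.sqrt (((Nat.sqrt q:ℕ):ℝ)^2) by
            rw [Real.sqrt_sq (by positivity)]]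
          exact Real.sqrt_le_sqrt (by exact_mod_cast h2)
        calc ((m2:ℝ))^2 ≤ ((Nat.sqrt q : ℕ):ℝ) := by exact_mod_cast h1
          _ ≤ Real.sqrt q := h3
      calc ∑ d ∈ (q.divisors.filter (fun d => ¬ q < d*d)).filter (fun d => ¬ q < d*d*(d*d)),
            (d:ℝ) * (Real.log (2*(q:ℝ)) / Real.log (2*(d:ℝ)))^2
          ≤ ∑ d ∈ (q.divisors.filter (fun d => ¬ q < d*d)).filter (fun d => ¬ q < d*d*(d*d)),
              (d:ℝ) * ((Real.log (2*(q:ℝ)))^2 * 2.09) := Finset.sum_le_sum hb3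
        _ = (∑ d ∈ (q.divisors.filter (fun d => ¬ q < d*d)).filter (fun d => ¬ q < d*d*(d*d)),
              (d:ℝ)) * ((Real.log (2*(q:ℝ)))^2 * 2.09) := by rw [← Finset.sum_mul]
        _ ≤ ((m2:ℝ)^2) * ((Real.log (2*(q:ℝ)))^2 * 2.09) := by
            apply mul_le_mul_of_nonneg_right _ (by positivity)
            calc ∑ d ∈ (q.divisors.filter (fun d => ¬ q < d*d)).filter
                  (fun d => ¬ q < d*d*(d*d)), (d:ℝ)
                ≤ ∑ d ∈ q.divisors.filter (· ≤ m2), (d:ℝ) := by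
                  apply Finset.sum_le_sum_of_subset_of_nonneg hsubm2
                  intro d _ _; positivity
              _ ≤ (m2:ℝ)^2 := sum_small_divisors q m2
        _ ≤ Real.sqrt q * ((Real.log (2*(q:ℝ)))^2 * 2.09) := by
            apply mul_le_mul_of_nonneg_right hm2q (by positivity)
        _ ≤ 27 * q := by
            have hlq := log_sq_le_sqrt (q:ℝ) hq1
            have hsq0 : 0 ≤ Real.sqrt q := Real.sqrt_nonneg q
            have hsqq : Real.sqrt q * Real.sqrt q = (q:ℝ) := Real.mul_self_sqrt (by linarith)
            nlinarith
    have hq0' : (0:ℝ) ≤ (q:ℝ) := by linarith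
    nlinarith [hpart2a, hpart2b]
  linarith

/-- For squarefree `q`, `∑_{d ∣ q} d / log(dx)^{2-ε} ≪ q loglog(e^e q) / log(qx)^{2-ε}`
with an absolute implied constant. -/
theorem stmt5 :
    ∃ K : ℝ, 0 < K ∧ ∀ (x ε : ℝ) (q : ℕ), 2 ≤ x → ε ∈ Set.Ioo (0 : ℝ) 1 → 0 < q →
      Squarefree q →
      ∑ d ∈ q.divisors, (d : ℝ) / (Real.log ((d : ℝ) * x)) ^ (2 - ε)
        ≤ K * q * Real.log (Real.log (Real.exp (Real.exp 1) * q))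
            / (Real.log ((q : ℝ) * x)) ^ (2 - ε) := by
  refine ⟨1500, by norm_num, ?_⟩
  intro x ε q hx hε hq0 hsq
  obtain ⟨hε0, hε1⟩ := hε
  have hq1 : (1:ℝ) ≤ (q:ℝ) := by exact_mod_cast hq0
  have hq0' : (q:ℝ) ≠ 0 := by positivity
  -- identify the loglog expression
  have hloglog : Real.log (Real.log (Real.exp (Real.exp 1) * q))
      = Real.log (Real.exp 1 + Real.log q) := by
    rw [Real.log_mul (Real.exp_ne_zero _) hq0', Real.log_exp]
  rw [hloglog]
  have hstep1 : ∑ d ∈ q.divisors, (d : ℝ) / (Real.log ((d : ℝ) * x)) ^ (2 - ε)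
      ≤ ∑ d ∈ q.divisors,
          (d:ℝ) * (Real.log (2*(q:ℝ)) / Real.log (2*(d:ℝ)))^2
            / (Real.log ((q:ℝ) * x)) ^ (2 - ε) := by
    apply Finset.sum_le_sum
    intro d hd
    exact term_bound d q x ε (Nat.pos_of_mem_divisors hd)
      (Nat.le_of_dvd hq0 (Nat.dvd_of_mem_divisors hd)) hx hε0 hε1
  have hlogqx : (0:ℝ) < Real.log ((q:ℝ)*x) := by
    apply Real.log_pos
    nlinarith
  have hpow : (0:ℝ) < (Real.log ((q:ℝ)*x)) ^ (2-ε) := Real.rpow_pos_of_pos hlogqx _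
  calc ∑ d ∈ q.divisors, (d : ℝ) / (Real.log ((d : ℝ) * x)) ^ (2 - ε)
      ≤ ∑ d ∈ q.divisors, (d:ℝ) * (Real.log (2*(q:ℝ)) / Real.log (2*(d:ℝ)))^2
          / (Real.log ((q:ℝ) * x)) ^ (2 - ε) := hstep1
    _ = (∑ d ∈ q.divisors, (d:ℝ) * (Real.log (2*(q:ℝ)) / Real.log (2*(d:ℝ)))^2)
          / (Real.log ((q:ℝ) * x)) ^ (2 - ε) := by rw [Finset.sum_div]
    _ ≤ (1500 * q * Real.log (Real.exp 1 + Real.log q))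
          / (Real.log ((q:ℝ) * x)) ^ (2 - ε) := by
        exact (div_le_div_iff_of_pos_right hpow).mpr (S2_bound q hsq)
    _ = 1500 * q * Real.log (Real.exp 1 + Real.log q)
          / (Real.log ((q:ℝ) * x)) ^ (2 - ε) := by ring
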